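/- For every real λ, the characteristic functions of the normalized random walks converge: lim_{n→∞} ((1/N)·Σ_{k=0}^{N−1} exp(iλβω_k / n^{1/N}))^n = exp(i^N · α · λ^N / N!). -/

import Mathlib

open Complex Real Filter Finset

open Topology


noncomputable def Kser (N j : ℕ) (u : ℂ) : ℂ :=
  ∑' m : ℕ, u ^ m / ((N * (m + j)).factorial : ℂ)

lemma Kser_summable (N j : ℕ) (hN : 1 ≤ N) (u : ℂ) :
    Summable (fun m : ℕ => u ^ m / ((N * (m + j)).factorial : ℂ)) := by
  apply Summable.of_norm_bounded (Real.summable_pow_div_factorial ‖u‖)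
  intro m
  rw [norm_div, norm_pow, Complex.norm_natCast]
  gcongr
  nlinarith

lemma Kser_norm_le (N j : ℕ) (hN : 1 ≤ N) (u : ℂ) : ‖Kser N j u‖ ≤ Real.exp ‖u‖ := by
  have hs : Summable (fun m : ℕ => ‖u ^ m / ((N * (m + j)).factorial : ℂ)‖) := by
    apply Summable.of_nonneg_of_le (fun m => norm_nonneg _)
      (fun m => ?_) (Real.summable_pow_div_factorial ‖u‖)
    rw [norm_div, norm_pow, Complex.norm_natCast]
    gcongr
    nlinarith
  refine (norm_tsum_le_tsum_norm hs).trans ?_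
  have : ∑' m : ℕ, ‖u‖ ^ m / (m.factorial : ℝ) = Real.exp ‖u‖ := by
    rw [Real.exp_eq_exp_ℝ, NormedSpace.exp_eq_tsum_div]
  rw [← this]
  apply Summable.tsum_le_tsum _ hs (Real.summable_pow_div_factorial ‖u‖)
  intro m
  rw [norm_div, norm_pow, Complex.norm_natCast]
  gcongr
  nlinarith

lemma Kser_peel (N j : ℕ) (hN : 1 ≤ N) (u : ℂ) :
    Kser N j u = 1 / ((N * j).factorial : ℂ) + u * Kser N (j + 1) u := by
  rw [Kser, Summable.tsum_eq_zero_add (Kser_summable N j hN u)]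
  congr 1
  · simp
  · rw [Kser, ← tsum_mul_left]
    congr 1 with m
    rw [pow_succ']
    ring_nf

lemma sum_exp_roots (N : ℕ) (hN : 1 ≤ N) (z : ℂ) :
    ∑ k ∈ Finset.range N, Complex.exp (z * Complex.exp (2 * Real.pi * Complex.I * k / N))
      = (N : ℂ) * Kser N 0 (z ^ N) := by
  have hN0 : N ≠ 0 := by omega
  have hζ := Complex.isPrimitiveRoot_exp N hN0
  set ζ : ℂ := Complex.exp (2 * ↑Real.pi * Complex.I / N) with hζdef
  have hωk : ∀ k : ℕ, Complex.exp (2 * ↑Real.pi * Complex.I * k / N) = ζ ^ k := by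
    intro k
    rw [hζdef, ← Complex.exp_nat_mul]
    congr 1; ring
  have hexp : ∀ w : ℂ, Complex.exp w = ∑' j : ℕ, w ^ j / (j.factorial : ℂ) := by
    intro w
    rw [Complex.exp_eq_exp_ℂ, NormedSpace.exp_eq_tsum_div]
  have hsum : ∀ w : ℂ, Summable (fun j : ℕ => w ^ j / (j.factorial : ℂ)) :=
    fun w => NormedSpace.expSeries_div_summable w
  have hinner : ∀ j : ℕ, (∑ k ∈ Finset.range N, (z * ζ ^ k) ^ j / (j.factorial : ℂ))
      = if N ∣ j then (N : ℂ) * (z ^ j / (j.factorial : ℂ)) else 0 := by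
    intro j
    have h1 : ∀ k, (z * ζ ^ k) ^ j / (j.factorial : ℂ)
        = (ζ ^ j) ^ k * (z ^ j / (j.factorial : ℂ)) := by
      intro k
      rw [mul_pow, pow_right_comm]
      ring
    rw [Finset.sum_congr rfl (fun k _ => h1 k), ← Finset.sum_mul]
    by_cases hd : N ∣ j
    · have : ζ ^ j = 1 := (hζ.pow_eq_one_iff_dvd j).mpr hd
      simp [this, hd]
    · have hne1 : ζ ^ j ≠ 1 := fun h => hd ((hζ.pow_eq_one_iff_dvd j).mp h)
      have : (ζ ^ j) ^ N = 1 := by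
        rw [← pow_mul, mul_comm, pow_mul, hζ.pow_eq_one, one_pow]
      rw [geom_sum_eq hne1, this]
      simp [hd]
  calc ∑ k ∈ Finset.range N, Complex.exp (z * Complex.exp (2 * ↑Real.pi * Complex.I * k / N))
      = ∑ k ∈ Finset.range N, ∑' j : ℕ, (z * ζ ^ k) ^ j / (j.factorial : ℂ) := by
        refine Finset.sum_congr rfl fun k _ => ?_
        rw [hωk k, hexp]
    _ = ∑' j : ℕ, ∑ k ∈ Finset.range N, (z * ζ ^ k) ^ j / (j.factorial : ℂ) :=
        (Summable.tsum_finsetSum fun k _ => hsum _).symm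
    _ = ∑' j : ℕ, (if N ∣ j then (N : ℂ) * (z ^ j / (j.factorial : ℂ)) else 0) :=
        tsum_congr hinner
    _ = ∑' m : ℕ, (if N ∣ N * m then (N : ℂ) * (z ^ (N * m) / ((N * m).factorial : ℂ)) else 0) := by
        refine (Function.Injective.tsum_eq (g := fun m : ℕ => N * m) ?_ ?_).symm
        · intro a b hab
          exact Nat.eq_of_mul_eq_mul_left (by omega) hab
        · intro j hj
          rcases (by by_contra hc; simp [hc] at hj : N ∣ j) with ⟨m, rfl⟩
          exact ⟨m, rfl⟩
    _ = (N : ℂ) * Kser N 0 (z ^ N) := by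
        rw [Kser, ← tsum_mul_left]
        refine tsum_congr fun m => ?_
        simp [pow_mul]

lemma tendsto_pow_exp_of_mul_sub_one (f : ℕ → ℂ) (c : ℂ)
    (h : Tendsto (fun n : ℕ => (n : ℂ) * (f n - 1)) atTop (𝓝 c)) :
    Tendsto (fun n => f n ^ n) atTop (𝓝 (Complex.exp c)) := by
  have hinv : Tendsto (fun n : ℕ => ((n : ℂ))⁻¹) atTop (𝓝 0) :=
    tendsto_inv_atTop_nhds_zero_nat (𝕜 := ℂ)
  have he : Tendsto (fun n => f n - 1) atTop (𝓝 0) := by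
    have h2 := h.mul hinv
    rw [mul_zero] at h2
    refine h2.congr' ?_
    filter_upwards [eventually_ge_atTop 1] with n hn
    have : (n : ℂ) ≠ 0 := Nat.cast_ne_zero.mpr (by omega)
    field_simp
  have hnorm : Tendsto (fun n => ‖f n - 1‖) atTop (𝓝 0) := by
    simpa using he.norm
  have hhalf : ∀ᶠ n in atTop, ‖f n - 1‖ < 1 / 2 :=
    hnorm.eventually_lt_const (by norm_num)
  have hdiff : Tendsto (fun n : ℕ => (n : ℂ) * (Complex.log (f n) - (f n - 1))) atTop (𝓝 0) := by
    have hb : Tendsto (fun n : ℕ => ‖(n : ℂ) * (f n - 1)‖ * ‖f n - 1‖) atTop (𝓝 0) := by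
      simpa using h.norm.mul hnorm
    refine squeeze_zero_norm' ?_ hb
    filter_upwards [hhalf] with n hn
    have h1 : ‖f n - 1‖ < 1 := by linarith
    have h2 : Complex.log (f n) - (f n - 1) = Complex.log (1 + (f n - 1)) - (f n - 1) := by
      ring_nf
    have h3 := Complex.norm_log_one_add_sub_self_le h1
    rw [norm_mul, h2]
    have h4 : (1 - ‖f n - 1‖)⁻¹ ≤ 2 := by
      rw [inv_le_comm₀ (by linarith) (by norm_num)]
      linarith
    calc ‖(n : ℂ)‖ * ‖Complex.log (1 + (f n - 1)) - (f n - 1)‖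
        ≤ ‖(n : ℂ)‖ * (‖f n - 1‖ ^ 2 * (1 - ‖f n - 1‖)⁻¹ / 2) := by
          gcongr
      _ ≤ ‖(n : ℂ)‖ * (‖f n - 1‖ ^ 2 * 2 / 2) := by
          gcongr
      _ = ‖(n : ℂ) * (f n - 1)‖ * ‖f n - 1‖ := by
          rw [norm_mul]; ring
  have hlog : Tendsto (fun n : ℕ => (n : ℂ) * Complex.log (f n)) atTop (𝓝 c) := by
    have h5 := hdiff.add h
    rw [zero_add] at h5
    refine h5.congr fun n => ?_
    ring
  have hne : ∀ᶠ n in atTop, f n ≠ 0 := by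
    filter_upwards [hhalf] with n hn h0
    rw [h0] at hn
    norm_num at hn
  have := (Complex.continuous_exp.tendsto c).comp hlog
  refine this.congr' ?_
  filter_upwards [hne] with n hn
  simp only [Function.comp_apply]
  rw [Complex.exp_nat_mul, Complex.exp_log hn]

/-- The characteristic functions of the normalized random walks
S̃_n = n^{-1/N}(ξ_1 + … + ξ_n), with ξ_j i.i.d. uniform on {β·exp(2πik/N)}_{k<N}
and β^N = α, converge: for every real λ,
lim_n ((1/N)·Σ_{k<N} exp(iλβω_k/n^{1/N}))^n = exp(i^N α λ^N / N!). -/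
theorem clt_for_xi (N : ℕ) (hN : 2 < N) (α β : ℂ) (hβ : β ^ N = α) (l : ℝ) :
    Filter.Tendsto
      (fun n : ℕ =>
        ((1 / (N : ℂ)) *
          ∑ k ∈ Finset.range N,
            Complex.exp (Complex.I * l * β * Complex.exp (2 * Real.pi * Complex.I * k / N) /
              ((((n : ℝ) ^ ((N : ℝ)⁻¹)) : ℝ) : ℂ))) ^ n)
      Filter.atTop
      (nhds (Complex.exp (Complex.I ^ N * α * (l : ℂ) ^ N / (Nat.factorial N : ℂ)))) := by
  have hN1 : 1 ≤ N := by omega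
  have hNC : (N : ℂ) ≠ 0 := Nat.cast_ne_zero.mpr (by omega)
  set w : ℂ := Complex.I ^ N * α * (l : ℂ) ^ N with hw
  apply tendsto_pow_exp_of_mul_sub_one
  have hpeel1 : ∀ u : ℂ, Kser N 1 u = 1 / (N.factorial : ℂ) + u * Kser N 2 u := by
    intro u
    have := Kser_peel N 1 hN1 u
    simpa using this
  have hlim : Tendsto (fun n : ℕ => w * Kser N 1 (w / n)) atTop
      (𝓝 (w / (N.factorial : ℂ))) := by
    suffices hs : Tendsto (fun n : ℕ => Kser N 1 (w / n)) atTop (𝓝 (1 / (N.factorial : ℂ))) by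
      have := hs.const_mul w
      simpa [mul_one_div, div_eq_mul_inv] using this
    have hz : Tendsto (fun n : ℕ => Kser N 1 (w / n) - 1 / (N.factorial : ℂ)) atTop (𝓝 0) := by
      have hb : Tendsto (fun n : ℕ => (‖w‖ * Real.exp ‖w‖) * ((n : ℝ))⁻¹) atTop (𝓝 0) := by
        have := (tendsto_inv_atTop_nhds_zero_nat (𝕜 := ℝ)).const_mul (‖w‖ * Real.exp ‖w‖)
        simpa using this
      refine squeeze_zero_norm' ?_ hb
      filter_upwards [eventually_ge_atTop 1] with n hn
      have hn0 : (0 : ℝ) < n := by exact_mod_cast hn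
      have hnwn : ‖w / (n : ℂ)‖ = ‖w‖ / n := by
        rw [norm_div, Complex.norm_natCast]
      have hle : ‖w‖ / n ≤ ‖w‖ := by
        rw [div_le_iff₀ hn0]
        nlinarith [norm_nonneg w, (by exact_mod_cast hn : (1:ℝ) ≤ n)]
      rw [hpeel1 (w / n), add_sub_cancel_left, norm_mul, hnwn]
      calc ‖w‖ / n * ‖Kser N 2 (w / n)‖
          ≤ ‖w‖ / n * Real.exp ‖w / (n : ℂ)‖ := by
            gcongr
            · exact Kser_norm_le N 2 hN1 _
        _ ≤ ‖w‖ / n * Real.exp ‖w‖ := by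
            rw [hnwn]
            gcongr
        _ = ‖w‖ * Real.exp ‖w‖ * ((n : ℝ))⁻¹ := by
            field_simp
    have := hz.add (tendsto_const_nhds (x := 1 / (N.factorial : ℂ)))
    simpa using this
  refine Tendsto.congr' ?_ hlim
  filter_upwards [eventually_ge_atTop 1] with n hn
  have hnR : (0 : ℝ) < n := by exact_mod_cast hn
  have hnC : (n : ℂ) ≠ 0 := Nat.cast_ne_zero.mpr (by omega)
  set r : ℝ := (n : ℝ) ^ ((N : ℝ)⁻¹) with hr
  have hrpos : 0 < r := Real.rpow_pos_of_pos hnR _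
  have hrC : ((r : ℝ) : ℂ) ≠ 0 := by exact_mod_cast hrpos.ne'
  have hrN : ((r : ℝ) : ℂ) ^ N = (n : ℂ) := by
    have hrn : r ^ N = (n : ℝ) := by
      rw [hr, ← Real.rpow_natCast ((n : ℝ) ^ ((N : ℝ)⁻¹)) N, ← Real.rpow_mul hnR.le,
        inv_mul_cancel₀ (by exact_mod_cast (by omega : N ≠ 0) : (N : ℝ) ≠ 0), Real.rpow_one]
    calc ((r : ℝ) : ℂ) ^ N = (((r ^ N : ℝ)) : ℂ) := by push_cast; ring
      _ = (n : ℂ) := by rw [hrn]; simp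
  set z : ℂ := Complex.I * l * β / ((r : ℝ) : ℂ) with hz
  have hzN : z ^ N = w / n := by
    rw [hz, div_pow, hrN, hw, ← hβ]
    ring
  have harg : ∀ k : ℕ,
      Complex.I * l * β * Complex.exp (2 * Real.pi * Complex.I * k / N) / ((r : ℝ) : ℂ)
        = z * Complex.exp (2 * Real.pi * Complex.I * k / N) := by
    intro k
    rw [hz]
    field_simp
  have hFn : (1 / (N : ℂ)) *
      ∑ k ∈ Finset.range N,
        Complex.exp (Complex.I * l * β * Complex.exp (2 * Real.pi * Complex.I * k / N) /
          ((r : ℝ) : ℂ)) = Kser N 0 (w / n) := by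
    rw [Finset.sum_congr rfl (fun k _ => by rw [harg k]), sum_exp_roots N hN1 z, hzN]
    field_simp
  rw [hFn, Kser_peel N 0 hN1 (w / n)]
  simp only [Nat.mul_zero, Nat.factorial_zero, Nat.cast_one]
  field_simp
  ring
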